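/- For every finite simple graph G, the group of k-algebra automorphisms of the evolution algebra X(G) is isomorphic, as a group, to the automorphism group of the graph G; an isomorphism is given by σ ↦ X(σ). -/
import Mathlib


open scoped BigOperators

variable (k : Type*) [Field k]

section Defs

variable {V : Type*} [Fintype V] [DecidableEq V]

/-- The square `b i * b i` of the `i`-th natural basis vector of the evolution algebra
`X(G)` attached to a simple graph `G`: for a vertex `v`, `b_v * b_v = b_v`; for an edge
`e = {v, w}`, `b_e * b_e = b_e + b_v + b_w`. -/
noncomputable def graphSq (G : SimpleGraph V) [DecidableRel G.Adj] :
    (V ⊕ ↥G.edgeSet) → (V ⊕ ↥G.edgeSet) → k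
  | Sum.inl v => Pi.single (Sum.inl v) 1
  | Sum.inr e => Pi.single (Sum.inr e) 1 +
      ∑ v ∈ Finset.univ.filter (· ∈ (e : Sym2 V)), Pi.single (Sum.inl v) 1

/-- The multiplication of the evolution algebra `X(G)` attached to a simple graph `G`,
as a `k`-bilinear map on the space of functions `(V ⊕ G.edgeSet) → k`.  Distinct natural
basis vectors multiply to zero, and the squares are given by `graphSq`. -/
noncomputable def graphMul (G : SimpleGraph V) [DecidableRel G.Adj] :
    ((V ⊕ ↥G.edgeSet) → k) →ₗ[k] ((V ⊕ ↥G.edgeSet) → k) →ₗ[k] ((V ⊕ ↥G.edgeSet) → k) :=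
  LinearMap.mk₂ k (fun x y => ∑ i, (x i * y i) • graphSq k G i)
    (by intro x x' y; simp [add_mul, add_smul, Finset.sum_add_distrib])
    (by intro c x y; simp [Finset.smul_sum, smul_smul, mul_assoc])
    (by intro x y y'; simp [mul_add, add_smul, Finset.sum_add_distrib])
    (by intro c x y; simp [Finset.smul_sum, smul_smul, mul_assoc, mul_left_comm])

end Defs

/-- The automorphism group of an evolution algebra structure `mul` on a `k`-vector space
`X`: the subgroup of `k`-linear bijections of `X` commuting with the multiplication. -/
def evolutionAut (k : Type*) [Field k] (X : Type*) [AddCommGroup X] [Module k X]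
    (mul : X →ₗ[k] X →ₗ[k] X) : Subgroup (X ≃ₗ[k] X) where
  carrier := {f | ∀ x y : X, f (mul x y) = mul (f x) (f y)}
  one_mem' := by intro x y; rfl
  mul_mem' := by
    intro f g hf hg x y
    show f (g (mul x y)) = mul (f (g x)) (f (g y))
    rw [hg, hf]
  inv_mem' := by
    intro f hf x y
    apply f.injective
    show f (f.symm (mul x y)) = f (mul (f.symm x) (f.symm y))
    rw [hf]
    simp

set_option linter.unusedSectionVars false

section Lemmas
variable {V : Type*} [Fintype V] [DecidableEq V] (G : SimpleGraph V) [DecidableRel G.Adj]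

lemma graphMul_apply (x y : (V ⊕ ↥G.edgeSet) → k) :
    graphMul k G x y = ∑ i, (x i * y i) • graphSq k G i := rfl

lemma graphSq_apply_inr (i : V ⊕ ↥G.edgeSet) (e : G.edgeSet) :
    graphSq k G i (Sum.inr e) = if i = Sum.inr e then 1 else 0 := by
  match i with
  | Sum.inl v => simp [graphSq, Pi.single_apply]
  | Sum.inr e' =>
      simp [graphSq, Pi.single_apply, Finset.sum_apply, eq_comm]

lemma graphSq_apply_inl (i : V ⊕ ↥G.edgeSet) (v : V) :
    graphSq k G i (Sum.inl v) =
      match i with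
      | Sum.inl w => if w = v then 1 else 0
      | Sum.inr e => if v ∈ (e : Sym2 V) then 1 else 0 := by
  match i with
  | Sum.inl w => simp [graphSq, Pi.single_apply, eq_comm]
  | Sum.inr e =>
      simp [graphSq, Pi.single_apply, Finset.sum_apply, Finset.sum_ite_eq, Finset.mem_filter]

lemma graphMul_single (i j : V ⊕ ↥G.edgeSet) :
    graphMul k G (Pi.single i 1) (Pi.single j 1) =
      if i = j then graphSq k G i else 0 := by
  rw [graphMul_apply]
  rcases eq_or_ne i j with rfl | hij
  · rw [if_pos rfl, Finset.sum_eq_single i]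
    · simp
    · intro m _ hm; simp [Pi.single_apply, hm]
    · simp
  · rw [if_neg hij]
    apply Finset.sum_eq_zero
    intro m _
    rcases eq_or_ne m i with rfl | hmi
    · rw [Pi.single_eq_of_ne hij, mul_zero, zero_smul]
    · rw [Pi.single_eq_of_ne hmi, zero_mul, zero_smul]

lemma sq_li (g : (V ⊕ ↥G.edgeSet) → k) (hg : ∑ i, g i • graphSq k G i = 0) :
    ∀ i, g i = 0 := by
  have hedge : ∀ e : G.edgeSet, g (Sum.inr e) = 0 := by
    intro e
    have h := congrFun hg (Sum.inr e)
    simp only [Finset.sum_apply, Pi.smul_apply, graphSq_apply_inr, smul_eq_mul,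
      mul_ite, mul_one, mul_zero, Pi.zero_apply, Finset.sum_ite_eq' ] at h
    simpa using h
  have hvert : ∀ v : V, g (Sum.inl v) = 0 := by
    intro v
    have h := congrFun hg (Sum.inl v)
    rw [Finset.sum_apply, Fintype.sum_sum_type] at h
    simp only [Pi.smul_apply, graphSq_apply_inl, smul_eq_mul, Pi.zero_apply] at h
    have h2 : ∑ x : G.edgeSet, g (Sum.inr x) * (if v ∈ (x : Sym2 V) then 1 else 0) = 0 :=
      Finset.sum_eq_zero fun e _ => by rw [hedge e, zero_mul]
    rw [h2, add_zero] at h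
    simpa [mul_ite, Finset.sum_ite_eq'] using h
  intro i
  match i with
  | Sum.inl v => exact hvert v
  | Sum.inr e => exact hedge e
end Lemmas

section Forward
variable {V : Type*} [Fintype V] [DecidableEq V] (G : SimpleGraph V) [DecidableRel G.Adj]

def permEquiv (σ : G ≃g G) : (V ⊕ ↥G.edgeSet) ≃ (V ⊕ ↥G.edgeSet) :=
  Equiv.sumCongr σ.toEquiv σ.mapEdgeSet

lemma permEquiv_inl (σ : G ≃g G) (v : V) :
    permEquiv G σ (Sum.inl v) = Sum.inl (σ v) := rfl

lemma permEquiv_inr (σ : G ≃g G) (e : G.edgeSet) :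
    permEquiv G σ (Sum.inr e) = Sum.inr (σ.mapEdgeSet e) := rfl

lemma mapEdgeSet_coe (σ : G ≃g G) (e : G.edgeSet) :
    (σ.mapEdgeSet e : Sym2 V) = Sym2.map σ (e : Sym2 V) := rfl

noncomputable def T (σ : G ≃g G) :
    ((V ⊕ ↥G.edgeSet) → k) ≃ₗ[k] ((V ⊕ ↥G.edgeSet) → k) :=
  LinearEquiv.funCongrLeft k k (permEquiv G σ).symm

lemma T_apply (σ : G ≃g G) (x : (V ⊕ ↥G.edgeSet) → k) (j : V ⊕ ↥G.edgeSet) :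
    T k G σ x j = x ((permEquiv G σ).symm j) := rfl

lemma T_single (σ : G ≃g G) (i : V ⊕ ↥G.edgeSet) :
    T k G σ (Pi.single i 1) = Pi.single (permEquiv G σ i) 1 := by
  funext j
  rw [T_apply, Pi.single_apply, Pi.single_apply]
  simp only [Equiv.symm_apply_eq]

lemma T_sq (σ : G ≃g G) (i : V ⊕ ↥G.edgeSet) :
    T k G σ (graphSq k G i) = graphSq k G (permEquiv G σ i) := by
  match i with
  | Sum.inl v =>
      show T k G σ (Pi.single (Sum.inl v) 1) = Pi.single (Sum.inl (σ v)) 1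
      rw [T_single, permEquiv_inl]
  | Sum.inr e =>
      show T k G σ (Pi.single (Sum.inr e) 1 + _) = _
      rw [map_add, map_sum, T_single]
      show _ = graphSq k G (Sum.inr (σ.mapEdgeSet e))
      unfold graphSq
      rw [permEquiv_inr]
      congr 1
      rw [Finset.sum_congr rfl (fun v _ => T_single k G σ (Sum.inl v))]
      apply Finset.sum_nbij' (fun v => σ v) (fun w => σ.symm w)
      · intro v hv
        simp only [Finset.mem_filter, Finset.mem_univ, true_and] at hv ⊢
        rw [mapEdgeSet_coe, Sym2.mem_map]
        exact ⟨v, hv, rfl⟩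
      · intro w hw
        simp only [Finset.mem_filter, Finset.mem_univ, true_and] at hw ⊢
        rw [mapEdgeSet_coe, Sym2.mem_map] at hw
        obtain ⟨a, ha, rfl⟩ := hw
        simpa using ha
      · intro v _; simp
      · intro w _; simp
      · intro v _; rw [permEquiv_inl]

lemma T_mem (σ : G ≃g G) :
    T k G σ ∈ evolutionAut k ((V ⊕ ↥G.edgeSet) → k) (graphMul k G) := by
  intro x y
  rw [graphMul_apply, graphMul_apply, map_sum]
  have h : ∀ i, T k G σ ((x i * y i) • graphSq k G i)
      = (T k G σ x (permEquiv G σ i) * T k G σ y (permEquiv G σ i)) •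
        graphSq k G (permEquiv G σ i) := by
    intro i
    rw [map_smul, T_sq, T_apply, T_apply, Equiv.symm_apply_apply]
  rw [Finset.sum_congr rfl (fun i _ => h i)]
  exact Equiv.sum_comp (permEquiv G σ)
    (fun i => (T k G σ x i * T k G σ y i) • graphSq k G i)
end Forward
section Converse
variable {V : Type*} [Fintype V] [DecidableEq V] (G : SimpleGraph V) [DecidableRel G.Adj]

lemma graphSq_inl (v : V) :
    graphSq k G (Sum.inl v) = Pi.single (Sum.inl v) (1 : k) := rfl

lemma graphSq_inr (e : G.edgeSet) :
    graphSq k G (Sum.inr e) = Pi.single (Sum.inr e) (1 : k) +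
      ∑ v ∈ Finset.univ.filter (· ∈ (e : Sym2 V)), Pi.single (Sum.inl v) 1 := rfl

lemma single_expand (x : (V ⊕ ↥G.edgeSet) → k) :
    x = ∑ j, x j • (Pi.single j 1 : (V ⊕ ↥G.edgeSet) → k) := by
  funext m
  rw [Finset.sum_apply]
  simp [Pi.single_apply, Finset.sum_ite_eq]

lemma aut_structure (f : ((V ⊕ ↥G.edgeSet) → k) ≃ₗ[k] ((V ⊕ ↥G.edgeSet) → k))
    (hf : ∀ x y, f (graphMul k G x y) = graphMul k G (f x) (f y)) :
    ∃ (σ : V → V) (τ : G.edgeSet → G.edgeSet),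
      (∀ v, f (Pi.single (Sum.inl v) 1) = Pi.single (Sum.inl (σ v)) 1) ∧
      (∀ e, f (Pi.single (Sum.inr e) 1) = Pi.single (Sum.inr (τ e)) 1) ∧
      (∀ e, ((τ e : Sym2 V)) = Sym2.map σ (e : Sym2 V)) := by
  classical
  set C : (V ⊕ ↥G.edgeSet) → (V ⊕ ↥G.edgeSet) → k :=
    fun m j => f (Pi.single j 1) m with hC
  -- orthogonality of columns
  have horth : ∀ m i j, i ≠ j → C m i * C m j = 0 := by
    intro m i j hij
    have h0 : f (graphMul k G (Pi.single i 1) (Pi.single j 1)) = 0 := by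
      rw [graphMul_single, if_neg hij, map_zero]
    rw [hf, graphMul_apply] at h0
    exact sq_li k G _ h0 m
  -- rows nonzero
  have hrow : ∀ m, ∃ j, C m j ≠ 0 := by
    intro m
    by_contra h
    push_neg at h
    obtain ⟨x, hx⟩ := f.surjective (Pi.single m 1)
    have h1 : (f x) m = 1 := by rw [hx]; simp
    have h2 : f x = ∑ j, x j • f (Pi.single j 1) := by
      conv_lhs => rw [single_expand k G x]
      rw [map_sum]
      exact Finset.sum_congr rfl fun j _ => map_smul f _ _
    rw [h2, Finset.sum_apply] at h1
    simp only [Pi.smul_apply, smul_eq_mul] at h1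
    rw [Finset.sum_eq_zero (fun j _ => by
      rw [show f (Pi.single j 1) m = C m j from rfl, h j, mul_zero])] at h1
    exact one_ne_zero h1.symm
  -- columns nonzero
  have hcol : ∀ j, ∃ m, C m j ≠ 0 := by
    intro j
    by_contra h
    push_neg at h
    have h1 : f (Pi.single j 1) = f 0 := by
      rw [map_zero]; exact funext fun m => h m
    have h2 := f.injective h1
    have := congrFun h2 j
    rw [Pi.single_eq_same, Pi.zero_apply] at this
    exact one_ne_zero this
  choose p hp using hrow
  have huniq : ∀ m j, C m j ≠ 0 → j = p m := by
    intro m j h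
    by_contra hne
    exact (mul_ne_zero h (hp m)) (horth m j (p m) hne)
  have hpsurj : Function.Surjective p := by
    intro j
    obtain ⟨m, hm⟩ := hcol j
    exact ⟨m, (huniq m j hm).symm⟩
  have hpbij : Function.Bijective p := hpsurj.bijective_of_finite
  set pE := Equiv.ofBijective p hpbij with hpE
  set π : (V ⊕ ↥G.edgeSet) → (V ⊕ ↥G.edgeSet) := fun j => pE.symm j with hπdef
  have hππ : ∀ j, p (π j) = j := fun j => pE.apply_symm_apply j
  have hπinj : Function.Injective π := fun a b h => by
    rw [← hππ a, ← hππ b, h]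
  set l : (V ⊕ ↥G.edgeSet) → k := fun j => C (π j) j with hl
  have hlne : ∀ j, l j ≠ 0 := by
    intro j
    have := hp (π j)
    rwa [hππ j] at this
  -- f on basis vectors
  have hfb2 : ∀ j, f (Pi.single j 1) = l j • (Pi.single (π j) 1 : (V ⊕ ↥G.edgeSet) → k) := by
    intro j
    funext m
    rw [Pi.smul_apply, Pi.single_apply, smul_eq_mul]
    rcases eq_or_ne m (π j) with rfl | hm
    · rw [if_pos rfl, mul_one]
    · rw [if_neg hm, mul_zero]
      by_contra hne
      apply hm
      rw [huniq m j hne]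
      exact (pE.symm_apply_apply m).symm
  -- squares
  have hsq : ∀ j, f (graphSq k G j) = (l j * l j) • graphSq k G (π j) := by
    intro j
    have h1 : graphMul k G (Pi.single j 1) (Pi.single j 1) = graphSq k G j := by
      rw [graphMul_single, if_pos rfl]
    have h2 := hf (Pi.single j 1) (Pi.single j 1)
    rw [h1, hfb2] at h2
    rw [h2]
    simp only [map_smul, LinearMap.smul_apply, smul_smul]
    rw [graphMul_single, if_pos rfl]
  -- vertices map to vertices
  have hvert : ∀ v, ∃ w, π (Sum.inl v) = Sum.inl w := by
    intro v
    match hm : π (Sum.inl v) with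
    | Sum.inl w => exact ⟨w, rfl⟩
    | Sum.inr e =>
        exfalso
        have h1 := hsq (Sum.inl v)
        rw [graphSq_inl, hfb2, hm] at h1
        set u := Quot.out (e : Sym2 V) with hu
        have hmem : u.1 ∈ (e : Sym2 V) := Sym2.out_fst_mem _
        have h2 := congrFun h1 (Sum.inl u.1)
        rw [Pi.smul_apply, Pi.smul_apply, smul_eq_mul, smul_eq_mul,
          Pi.single_apply, if_neg (by simp)] at h2
        rw [show graphSq k G (Sum.inr e) (Sum.inl u.1) = 1 by
          simp [graphSq_apply_inl, hmem]] at h2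
        rw [mul_zero, mul_one] at h2
        exact hlne _ (mul_self_eq_zero.mp h2.symm)
  choose σ hσ using hvert
  have hσinj : Function.Injective σ := by
    intro a b h
    have : π (Sum.inl a) = π (Sum.inl b) := by rw [hσ a, hσ b, h]
    exact Sum.inl.inj (hπinj this)
  have hlv : ∀ v, l (Sum.inl v) = 1 := by
    intro v
    have h1 := hsq (Sum.inl v)
    rw [graphSq_inl, hfb2, hσ, graphSq_inl] at h1
    have h2 := congrFun h1 (Sum.inl (σ v))
    rw [Pi.smul_apply, Pi.smul_apply, Pi.single_eq_same, smul_eq_mul, smul_eq_mul,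
      mul_one, mul_one] at h2
    exact mul_left_cancel₀ (hlne _) (h2.symm.trans (mul_one _).symm)
  -- key evaluation lemma
  have key : ∀ (s : Finset V) (u : V),
      (∑ v ∈ s, Pi.single (Sum.inl (σ v)) (1:k) : (V ⊕ ↥G.edgeSet) → k)
        (Sum.inl (σ u)) = if u ∈ s then 1 else 0 := by
    intro s u
    have hterm : ∀ v, (Pi.single (Sum.inl (σ v)) (1:k) : (V ⊕ ↥G.edgeSet) → k)
        (Sum.inl (σ u)) = if u = v then 1 else 0 := by
      intro v
      rcases eq_or_ne u v with rfl | h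
      · rw [if_pos rfl, Pi.single_eq_same]
      · rw [if_neg h, Pi.single_eq_of_ne (fun hh => h (hσinj (Sum.inl.inj hh)))]
    rw [Finset.sum_apply]
    rw [Finset.sum_congr rfl (fun v _ => hterm v)]
    exact Finset.sum_ite_eq s u (fun _ => 1)
  -- edges map to edges
  have hedge : ∀ e, ∃ e', π (Sum.inr e) = Sum.inr e' := by
    intro e
    match hm : π (Sum.inr e) with
    | Sum.inr e' => exact ⟨e', rfl⟩
    | Sum.inl w =>
        exfalso
        have h1 := hsq (Sum.inr e)
        rw [graphSq_inr, hm, graphSq_inl, map_add, map_sum, hfb2, hm] at h1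
        rw [Finset.sum_congr rfl (fun v _ => by
          rw [hfb2, hσ, hlv, one_smul])] at h1
        set u := Quot.out (e : Sym2 V) with hu
        have hmem : u.1 ∈ (e : Sym2 V) := Sym2.out_fst_mem _
        have hne : σ u.1 ≠ w := by
          intro hh
          have : π (Sum.inl u.1) = π (Sum.inr e) := by rw [hσ, hm, hh]
          exact (Sum.inl_ne_inr (hπinj this)).elim
        have h2 := congrFun h1 (Sum.inl (σ u.1))
        rw [Pi.add_apply, Pi.smul_apply, Pi.smul_apply, smul_eq_mul, smul_eq_mul] at h2
        rw [key, if_pos (by simp [hmem])] at h2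
        have hz : (Pi.single (Sum.inl w) (1:k) : (V ⊕ ↥G.edgeSet) → k)
            (Sum.inl (σ u.1)) = 0 :=
          Pi.single_eq_of_ne (fun hh => hne (Sum.inl.inj hh)) 1
        rw [hz, mul_zero, mul_zero, zero_add] at h2
        exact one_ne_zero h2
  choose τ hτ using hedge
  -- the edge squares, with vertex scalars 1
  have hsq_e : ∀ e, (l (Sum.inr e) • (Pi.single (Sum.inr (τ e)) 1 : (V ⊕ ↥G.edgeSet) → k) +
      ∑ v ∈ Finset.univ.filter (· ∈ (e : Sym2 V)), Pi.single (Sum.inl (σ v)) 1) =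
      (l (Sum.inr e) * l (Sum.inr e)) • (Pi.single (Sum.inr (τ e)) 1 +
        ∑ w ∈ Finset.univ.filter (· ∈ ((τ e : G.edgeSet) : Sym2 V)),
          Pi.single (Sum.inl w) 1) := by
    intro e
    have h1 := hsq (Sum.inr e)
    rw [graphSq_inr, hτ, graphSq_inr, map_add, map_sum, hfb2, hτ] at h1
    rw [Finset.sum_congr rfl (fun v _ => by
      rw [hfb2, hσ, hlv, one_smul])] at h1
    exact h1
  have hle : ∀ e, l (Sum.inr e) = 1 := by
    intro e
    have h2 := congrFun (hsq_e e) (Sum.inr (τ e))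
    have hz1 : (∑ v ∈ Finset.univ.filter (· ∈ (e : Sym2 V)),
        Pi.single (Sum.inl (σ v)) (1:k) : (V ⊕ ↥G.edgeSet) → k) (Sum.inr (τ e)) = 0 := by
      rw [Finset.sum_apply]
      exact Finset.sum_eq_zero fun v _ => Pi.single_eq_of_ne (by simp) 1
    have hz2 : (∑ w ∈ Finset.univ.filter (· ∈ ((τ e : G.edgeSet) : Sym2 V)),
        Pi.single (Sum.inl w) (1:k) : (V ⊕ ↥G.edgeSet) → k) (Sum.inr (τ e)) = 0 := by
      rw [Finset.sum_apply]
      exact Finset.sum_eq_zero fun v _ => Pi.single_eq_of_ne (by simp) 1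
    rw [Pi.add_apply, Pi.smul_apply, Pi.smul_apply, Pi.add_apply, hz1, hz2,
      Pi.single_eq_same, smul_eq_mul, smul_eq_mul, mul_one, add_zero, add_zero,
      mul_one] at h2
    exact mul_left_cancel₀ (hlne _) (h2.symm.trans (mul_one _).symm)
  -- vertex parts of squares agree
  have hparts : ∀ e : G.edgeSet, (∑ v ∈ Finset.univ.filter (· ∈ (e : Sym2 V)),
      Pi.single (Sum.inl (σ v)) (1:k) : (V ⊕ ↥G.edgeSet) → k) =
      ∑ w ∈ Finset.univ.filter (· ∈ ((τ e : G.edgeSet) : Sym2 V)),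
        Pi.single (Sum.inl w) 1 := by
    intro e
    have h1 := hsq_e e
    rw [hle, one_mul, one_smul, one_smul] at h1
    exact add_left_cancel h1
  have hmap : ∀ e : G.edgeSet, ((τ e : Sym2 V)) = Sym2.map σ (e : Sym2 V) := by
    intro e
    apply Sym2.ext
    intro u
    rw [Sym2.mem_map]
    constructor
    · intro hu
      by_contra hno
      push_neg at hno
      have h1 := congrFun (hparts e) (Sum.inl u)
      rw [Finset.sum_apply, Finset.sum_apply] at h1
      have hz : ∑ v ∈ Finset.univ.filter (· ∈ (e : Sym2 V)),
          (Pi.single (Sum.inl (σ v)) (1:k) : (V ⊕ ↥G.edgeSet) → k) (Sum.inl u) = 0 :=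
        Finset.sum_eq_zero fun v hv => Pi.single_eq_of_ne (fun hh =>
          hno v (by simpa using hv) (Sum.inl.inj hh).symm) 1
      rw [hz] at h1
      have hterm2 : ∀ w, (Pi.single (Sum.inl w) (1:k) : (V ⊕ ↥G.edgeSet) → k)
          (Sum.inl u) = if u = w then 1 else 0 := by
        intro w
        rcases eq_or_ne u w with rfl | h
        · rw [if_pos rfl, Pi.single_eq_same]
        · rw [if_neg h, Pi.single_eq_of_ne (by simpa using h)]
      rw [Finset.sum_congr rfl (fun w _ => hterm2 w),
        Finset.sum_ite_eq _ u (fun _ => (1:k))] at h1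
      rw [if_pos (by simp [hu])] at h1
      exact one_ne_zero h1.symm
    · rintro ⟨v, hv, rfl⟩
      have h1 := congrFun (hparts e) (Sum.inl (σ v))
      rw [key _ v, if_pos (by simp [hv]), Finset.sum_apply] at h1
      by_contra hno
      have hz : ∑ w ∈ Finset.univ.filter (· ∈ ((τ e : G.edgeSet) : Sym2 V)),
          (Pi.single (Sum.inl w) (1:k) : (V ⊕ ↥G.edgeSet) → k) (Sum.inl (σ v)) = 0 :=
        Finset.sum_eq_zero fun w hw => Pi.single_eq_of_ne (fun hh =>
          hno (by rw [Sum.inl.inj hh]; simpa using hw)) 1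
      rw [hz] at h1
      exact one_ne_zero h1
  exact ⟨σ, τ, fun v => by rw [hfb2, hlv, one_smul, hσ],
    fun e => by rw [hfb2, hle, one_smul, hτ], hmap⟩
end Converse

section Main
variable {V : Type*} [Fintype V] [DecidableEq V] (G : SimpleGraph V) [DecidableRel G.Adj]

lemma permEquiv_one : permEquiv G (1 : G ≃g G) = Equiv.refl _ := by
  apply Equiv.ext
  rintro (v | e)
  · rfl
  · refine congrArg Sum.inr (Subtype.ext ?_)
    show Sym2.map _ (e : Sym2 V) = (e : Sym2 V)
    refine Sym2.ind (fun x y => ?_) (e : Sym2 V)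
    rw [Sym2.map_pair_eq]
    rfl

lemma permEquiv_mul (σ σ' : G ≃g G) :
    permEquiv G (σ * σ') = (permEquiv G σ').trans (permEquiv G σ) := by
  apply Equiv.ext
  rintro (v | e)
  · rfl
  · refine congrArg Sum.inr (Subtype.ext ?_)
    show Sym2.map _ _ = Sym2.map _ (Sym2.map _ _)
    rw [Sym2.map_map]
    rfl

noncomputable def graphHom :
    (G ≃g G) →* evolutionAut k ((V ⊕ ↥G.edgeSet) → k) (graphMul k G) where
  toFun σ := ⟨T k G σ, T_mem k G σ⟩
  map_one' := by
    apply Subtype.ext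
    apply LinearEquiv.ext
    intro x
    funext j
    show x ((permEquiv G 1).symm j) = x j
    rw [permEquiv_one]
    rfl
  map_mul' := fun σ σ' => by
    apply Subtype.ext
    apply LinearEquiv.ext
    intro x
    funext j
    show x ((permEquiv G (σ * σ')).symm j) = _
    rw [permEquiv_mul]
    rfl

lemma graphHom_inj : Function.Injective (graphHom k G) := by
  intro σ σ' h
  have h0 : T k G σ = T k G σ' := congrArg Subtype.val h
  apply RelIso.ext
  intro v
  have h1 := DFunLike.congr_fun h0 (Pi.single (Sum.inl v) (1:k))
  rw [T_single, T_single, permEquiv_inl, permEquiv_inl] at h1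
  by_contra hne
  have h2 := congrFun h1 (Sum.inl (σ v))
  rw [Pi.single_eq_same, Pi.single_eq_of_ne (fun hh => hne (Sum.inl.inj hh))] at h2
  exact one_ne_zero h2

lemma graphHom_surj : Function.Surjective (graphHom k G) := by
  rintro ⟨f, hf⟩
  obtain ⟨σ, τ, hσ, hτ, hmap⟩ := aut_structure k G f hf
  have hfs := (evolutionAut k ((V ⊕ ↥G.edgeSet) → k) (graphMul k G)).inv_mem hf
  obtain ⟨σ', τ', hσ', hτ', hmap'⟩ := aut_structure k G f.symm hfs
  have hli : ∀ v, σ' (σ v) = v := by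
    intro v
    have h1 : f.symm (f (Pi.single (Sum.inl v) 1)) = Pi.single (Sum.inl v) (1:k) :=
      f.symm_apply_apply _
    rw [hσ, hσ'] at h1
    by_contra hne
    have h2 := congrFun h1 (Sum.inl v)
    rw [Pi.single_eq_same, Pi.single_eq_of_ne (fun hh => hne (Sum.inl.inj hh).symm)] at h2
    exact one_ne_zero h2.symm
  have hri : ∀ v, σ (σ' v) = v := by
    intro v
    have h1 : f (f.symm (Pi.single (Sum.inl v) 1)) = Pi.single (Sum.inl v) (1:k) :=
      f.apply_symm_apply _
    rw [hσ', hσ] at h1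
    by_contra hne
    have h2 := congrFun h1 (Sum.inl v)
    rw [Pi.single_eq_same, Pi.single_eq_of_ne (fun hh => hne (Sum.inl.inj hh).symm)] at h2
    exact one_ne_zero h2.symm
  have hadj : ∀ a b : V, G.Adj a b → G.Adj (σ a) (σ b) := by
    intro a b hab
    have he : s(a, b) ∈ G.edgeSet := hab
    have h1 := hmap ⟨s(a,b), he⟩
    rw [Sym2.map_pair_eq] at h1
    have h2 : s(σ a, σ b) ∈ G.edgeSet := by rw [← h1]; exact (τ ⟨_, he⟩).2
    exact h2
  have hadj' : ∀ a b : V, G.Adj a b → G.Adj (σ' a) (σ' b) := by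
    intro a b hab
    have he : s(a, b) ∈ G.edgeSet := hab
    have h1 := hmap' ⟨s(a,b), he⟩
    rw [Sym2.map_pair_eq] at h1
    have h2 : s(σ' a, σ' b) ∈ G.edgeSet := by rw [← h1]; exact (τ' ⟨_, he⟩).2
    exact h2
  have hiff : ∀ a b, G.Adj (σ a) (σ b) ↔ G.Adj a b := by
    intro a b
    constructor
    · intro h
      have h2 := hadj' _ _ h
      rwa [hli, hli] at h2
    · exact hadj a b
  refine ⟨⟨⟨σ, σ', hli, hri⟩, hiff _ _⟩, ?_⟩
  apply Subtype.ext
  apply LinearEquiv.toLinearMap_injective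
  apply Module.Basis.ext (Pi.basisFun k (V ⊕ ↥G.edgeSet))
  intro i
  set σG : G ≃g G := ⟨⟨σ, σ', hli, hri⟩, hiff _ _⟩ with hσG
  show T k G σG (Pi.basisFun k (V ⊕ ↥G.edgeSet) i) = f (Pi.basisFun k (V ⊕ ↥G.edgeSet) i)
  rw [show Pi.basisFun k (V ⊕ ↥G.edgeSet) i = Pi.single i 1 by
    rw [Pi.basisFun_apply]]
  rw [T_single]
  match i with
  | Sum.inl v => rw [hσ]; rfl
  | Sum.inr e =>
      rw [hτ, permEquiv_inr]
      have h3 : σG.mapEdgeSet e = τ e := by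
        apply Subtype.ext
        rw [mapEdgeSet_coe, hmap]
        rfl
      rw [h3]
end Main

/-- For every finite simple graph `G`, the group of `k`-algebra automorphisms of the
evolution algebra `X(G)` is isomorphic, as a group, to the automorphism group of the
graph `G`; an isomorphism is given by `σ ↦ X(σ)`, i.e. it sends a graph automorphism `σ`
to the algebra automorphism permuting the natural basis accordingly. -/
theorem graphEvolutionAlgebra_autGroup {V : Type*} [Fintype V] [DecidableEq V]
    (G : SimpleGraph V) [DecidableRel G.Adj] :
    ∃ Φ : (G ≃g G) ≃* evolutionAut k ((V ⊕ ↥G.edgeSet) → k) (graphMul k G),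
      ∀ σ : G ≃g G,
        (∀ v : V, (Φ σ).1 (Pi.single (Sum.inl v) 1) = Pi.single (Sum.inl (σ v)) 1) ∧
        (∀ e : ↥G.edgeSet,
          (Φ σ).1 (Pi.single (Sum.inr e) 1) =
            Pi.single (Sum.inr (σ.mapEdgeSet e)) 1) := by
  refine ⟨MulEquiv.ofBijective (graphHom k G) ⟨graphHom_inj k G, graphHom_surj k G⟩, ?_⟩
  intro σ
  constructor
  · intro v
    show T k G σ (Pi.single (Sum.inl v) 1) = _
    rw [T_single, permEquiv_inl]
  · intro e
    show T k G σ (Pi.single (Sum.inr e) 1) = _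
    rw [T_single, permEquiv_inr]
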